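/- Let v₁,…,v_{n−1} : S¹ → ℂ \ {0} be smooth curves (critical values of the loop of polynomials g_t). If d/dt arg v_q(t) ≠ 0 for all q and all t, then (∂g/∂u, ∂(arg g)/∂t) ≠ (0,0) at every point (u, t) ∈ (ℂ × S¹) with g(u,t) ≠ 0. -/

import Mathlib

/-- If the critical values `v_p(t) = g_t(c_p(t))` of the loop of polynomials
`g(u,t) = ∏ⱼ (u − zⱼ(t))` satisfy `d/dt arg v_p(t) ≠ 0` for all `p` and `t`, then
`(∂g/∂u, ∂(arg g)/∂t) ≠ (0,0)` at every point `(u,t)` with `g(u,t) ≠ 0`, where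
`∂(arg g)/∂t := Im((∂g/∂t)/g)`. -/
theorem stmt14 (n : ℕ) (z : Fin n → ℝ → ℂ)
    (hzdiff : ∀ j : Fin n, Differentiable ℝ (z j))
    (hzdist : ∀ t : ℝ, ∀ i j : Fin n, i ≠ j → z i t ≠ z j t)
    (g : ℂ → ℝ → ℂ) (hg : g = fun u t => ∏ j : Fin n, (u - z j t))
    (c : Fin (n - 1) → ℝ → ℂ)
    (hcdiff : ∀ p : Fin (n - 1), Differentiable ℝ (c p))
    (hcdist : ∀ t : ℝ, ∀ p q : Fin (n - 1), p ≠ q → c p t ≠ c q t)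
    (hc : ∀ t : ℝ, ∀ u : ℂ, deriv (fun u' => g u' t) u = 0 ↔ ∃ p, u = c p t)
    (v : Fin (n - 1) → ℝ → ℂ) (hv : v = fun p t => g (c p t) t)
    (hv0 : ∀ p t, v p t ≠ 0)
    (hvarg : ∀ (p : Fin (n - 1)) (t : ℝ), (deriv (v p) t / v p t).im ≠ 0) :
    ∀ (u : ℂ) (t : ℝ), g u t ≠ 0 →
      (deriv (fun u' => g u' t) u, (deriv (fun t' => g u t') t / g u t).im) ≠
        ((0 : ℂ), (0 : ℝ)) := by
  subst hg hv
  intro u t hgu heq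
  have h1 : deriv (fun u' => ∏ j : Fin n, (u' - z j t)) u = 0 := (Prod.ext_iff.mp heq).1
  have h2 : (deriv (fun t' => ∏ j : Fin n, (u - z j t')) t /
      ∏ j : Fin n, (u - z j t)).im = 0 := (Prod.ext_iff.mp heq).2
  obtain ⟨p, rfl⟩ := (hc t u).mp h1
  set G : ℂ × ℝ → ℂ := fun q => ∏ j : Fin n, (q.1 - z j q.2) with hGdef
  -- differentiability of G over ℝ
  have hfac : ∀ (j : Fin n) (q : ℂ × ℝ),
      DifferentiableAt ℝ (fun q : ℂ × ℝ => q.1 - z j q.2) q := fun j q =>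
    (differentiableAt_fst).sub (((hzdiff j).differentiableAt).comp q differentiableAt_snd)
  have hGdiff : ∀ q, DifferentiableAt ℝ G q := fun q =>
    (HasFDerivAt.finset_prod (u := Finset.univ)
      (fun j _ => (hfac j q).hasFDerivAt)).differentiableAt
  set x : ℂ × ℝ := (c p t, t) with hx
  set L := fderiv ℝ G x with hL
  -- the curve s ↦ (c p s, s)
  have hcurve : HasDerivAt (fun s : ℝ => ((c p s, s) : ℂ × ℝ))
      (deriv (c p) t, 1) t :=
    ((hcdiff p t).hasDerivAt).prodMk (hasDerivAt_id t)
  have hvd : HasDerivAt (fun s : ℝ => G (c p s, s)) (L (deriv (c p) t, 1)) t := by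
    have := HasFDerivAt.comp_hasDerivAt (f := fun s : ℝ => ((c p s, s) : ℂ × ℝ)) t
      ((hGdiff x).hasFDerivAt) hcurve
    exact this
  -- partial derivative in u is 0
  have hf1 : ∀ w : ℂ, DifferentiableAt ℂ (fun u' : ℂ => ∏ j : Fin n, (u' - z j t)) w :=
    fun w => (HasFDerivAt.finset_prod (u := Finset.univ)
      (fun j _ => ((differentiableAt_id.sub (differentiableAt_const _)).hasFDerivAt :
        HasFDerivAt (fun u' : ℂ => u' - z j t) _ w))).differentiableAt
  have hd1 : HasDerivAt (fun u' : ℂ => ∏ j : Fin n, (u' - z j t)) 0 (c p t) := by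
    have := (hf1 (c p t)).hasDerivAt
    rwa [h1] at this
  have hcomp1 : HasFDerivAt (fun u' : ℂ => G (u', t))
      (L.comp (ContinuousLinearMap.inl ℝ ℂ ℝ)) (c p t) :=
    HasFDerivAt.comp (f := fun e : ℂ => (e, t)) (c p t) ((hGdiff x).hasFDerivAt) (hasFDerivAt_prodMk_left (𝕜 := ℝ) (c p t) t)
  have heq1 : (fun u' : ℂ => G (u', t)) = fun u' : ℂ => ∏ j : Fin n, (u' - z j t) := rfl
  have hpart1 : L (deriv (c p) t, 0) = 0 := by
    have huniq : L.comp (ContinuousLinearMap.inl ℝ ℂ ℝ) =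
        ((ContinuousLinearMap.smulRight (1 : ℂ →L[ℂ] ℂ) (0 : ℂ)).restrictScalars ℝ) := by
      apply hcomp1.unique
      rw [heq1]
      exact (hd1.hasFDerivAt).restrictScalars ℝ
    have := congrArg (fun (M : ℂ →L[ℝ] ℂ) => M (deriv (c p) t)) huniq
    simpa using this
  -- partial derivative in t
  have hcomp2 : HasFDerivAt (fun t' : ℝ => G (c p t, t'))
      (L.comp (ContinuousLinearMap.inr ℝ ℂ ℝ)) t :=
    ((hGdiff x).hasFDerivAt).comp t (hasFDerivAt_prodMk_right (𝕜 := ℝ) (c p t) t)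
  have hpart2 : HasDerivAt (fun t' : ℝ => ∏ j : Fin n, (c p t - z j t')) (L (0, 1)) t := by
    have := hcomp2.hasDerivAt
    simpa using this
  -- combine
  have hsplit : L (deriv (c p) t, 1) = L (0, 1) := by
    have : ((deriv (c p) t, 1) : ℂ × ℝ) = (deriv (c p) t, 0) + (0, 1) := by
      simp [Prod.ext_iff]
    rw [this, map_add, hpart1, zero_add]
  have hvderiv : deriv (fun s : ℝ => ∏ j : Fin n, (c p s - z j s)) t = L (0, 1) := by
    have := hvd.deriv
    rwa [hsplit] at this
  have h2' : (deriv (fun s : ℝ => ∏ j : Fin n, (c p s - z j s)) t /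
      ∏ j : Fin n, (c p t - z j t)).im = 0 := by
    rw [hvderiv, ← hpart2.deriv]
    exact h2
  exact hvarg p t h2'
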